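/- arXiv:1807.04404 — 4 statements merged into one kernel-verified Lean document; each statement's English description precedes it below -/
import Mathlib

section
/- For all real numbers r1, r2, y1, y2 with y1, y2 > 0, if r1 ≤ 2(1 + ln y1), r2 ≤ 2(1 + ln y2), and r1 ≠ r2, then r1 + (r1 − r2)/(e^{r1−r2} − 1) ≤ 2(1 + ln(y1 + y2)). -/
open Real

/-- Core inequality: for `u > 0`, `exp (u / (e^{2u} - 1)) ≤ 1 + e^{-u}`. -/
lemma core_ineq (u : ℝ) (hu : 0 < u) :
    Real.exp (u / (Real.exp (2 * u) - 1)) ≤ 1 + Real.exp (-u) := by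
  have hE2 : Real.exp (2 * u) = Real.exp u * Real.exp u := by
    rw [two_mul, Real.exp_add]
  have hEsub : u + 1 ≤ Real.exp u := Real.add_one_le_exp u
  set E := Real.exp u with hEdef
  have hE1 : 1 < E := by linarith
  have hden : 0 < E * E - 1 := by nlinarith
  set t := u / (E * E - 1) with htdef
  have ht0 : 0 < t := div_pos hu hden
  have htle : t ≤ 1 / (E + 1) := by
    rw [div_le_div_iff₀ hden (by linarith)]
    nlinarith
  have ht1 : t < 1 := lt_of_le_of_lt htle (by
    rw [div_lt_one (by linarith)]; linarith)
  have hX : (1 - t) * Real.exp t ≤ 1 := by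
    have h := Real.add_one_le_exp (-t)
    have h2 : (1 - t) * Real.exp t ≤ Real.exp (-t) * Real.exp t :=
      mul_le_mul_of_nonneg_right (by linarith) (Real.exp_pos t).le
    rw [← Real.exp_add] at h2
    simpa using h2
  have hXle : Real.exp t ≤ 1 / (1 - t) := by
    rw [le_div_iff₀ (by linarith)]
    linarith [hX]
  have hfin : 1 / (1 - t) ≤ 1 + E⁻¹ := by
    have hE0 : (0:ℝ) < E := by linarith
    have h1t : E / (E + 1) ≤ 1 - t := by
      rw [div_le_iff₀ (by linarith : (0:ℝ) < E + 1)]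
      have hmul := mul_le_mul_of_nonneg_right htle (by linarith : (0:ℝ) ≤ E + 1)
      rw [div_mul_cancel₀ _ (by linarith : (E:ℝ) + 1 ≠ 0)] at hmul
      nlinarith
    have hpos : (0:ℝ) < E / (E + 1) := by positivity
    calc 1 / (1 - t) ≤ 1 / (E / (E + 1)) := one_div_le_one_div_of_le hpos h1t
      _ = (E + 1) / E := one_div_div _ _
      _ = 1 + E⁻¹ := by field_simp
  calc Real.exp (u / (Real.exp (2 * u) - 1)) = Real.exp t := by rw [htdef, hE2]
    _ ≤ 1 / (1 - t) := hXle
    _ ≤ 1 + E⁻¹ := hfin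
    _ = 1 + Real.exp (-u) := by rw [Real.exp_neg]

/-- For `r2 < r1`, `e^{r/2} ≤ e^{r1/2} + e^{r2/2}`. -/
lemma half_exp_le (r1 r2 : ℝ) (h : r2 < r1) :
    Real.exp ((r1 + (r1 - r2) / (Real.exp (r1 - r2) - 1)) / 2)
      ≤ Real.exp (r1 / 2) + Real.exp (r2 / 2) := by
  set d := r1 - r2 with hd
  have hd0 : 0 < d := sub_pos.mpr h
  have hcore := core_ineq (d / 2) (by linarith)
  have h2u : 2 * (d / 2) = d := by ring
  rw [h2u] at hcore
  have hsplit : (r1 + d / (Real.exp d - 1)) / 2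
      = r1 / 2 + (d / 2) / (Real.exp d - 1) := by ring
  rw [hsplit, Real.exp_add]
  have hr2 : r2 / 2 = r1 / 2 + (-(d / 2)) := by rw [hd]; ring
  rw [hr2, Real.exp_add]
  nlinarith [Real.exp_pos (r1 / 2),
    mul_le_mul_of_nonneg_left hcore (Real.exp_pos (r1 / 2)).le]

/-- Symmetry of the ratio. -/
lemma ratio_symm (r1 r2 : ℝ) (h : r1 ≠ r2) :
    r1 + (r1 - r2) / (Real.exp (r1 - r2) - 1)
      = r2 + (r2 - r1) / (Real.exp (r2 - r1) - 1) := by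
  have hdne : r1 - r2 ≠ 0 := sub_ne_zero.mpr h
  have h1 : Real.exp (r1 - r2) ≠ 1 := by
    intro hc
    exact hdne (by simpa using Real.exp_injective (by rw [hc, Real.exp_zero]))
  have h2 : Real.exp (r2 - r1) ≠ 1 := by
    intro hc
    have : r2 - r1 = 0 := by
      simpa using Real.exp_injective (by rw [hc, Real.exp_zero])
    apply hdne; linarith
  have hprod : Real.exp (r1 - r2) * Real.exp (r2 - r1) = 1 := by
    rw [← Real.exp_add]; simp
  have hA : Real.exp (r1 - r2) - 1 ≠ 0 := sub_ne_zero.mpr h1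
  have hB : Real.exp (r2 - r1) - 1 ≠ 0 := sub_ne_zero.mpr h2
  field_simp
  linear_combination (r1 - r2) * hprod

/-- Smooth-max property of the two-point unfair MTS competitive ratio. -/
theorem two_point_ratio_smooth_max (r1 r2 y1 y2 : ℝ) (hy1 : 0 < y1) (hy2 : 0 < y2)
    (h1 : r1 ≤ 2 * (1 + Real.log y1)) (h2 : r2 ≤ 2 * (1 + Real.log y2))
    (hne : r1 ≠ r2) :
    r1 + (r1 - r2) / (Real.exp (r1 - r2) - 1) ≤ 2 * (1 + Real.log (y1 + y2)) := by
  have key : ∀ a b c e : ℝ, 0 < c → 0 < e → b < a →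
      a ≤ 2 * (1 + Real.log c) → b ≤ 2 * (1 + Real.log e) →
      a + (a - b) / (Real.exp (a - b) - 1) ≤ 2 * (1 + Real.log (c + e)) := by
    intro a b c e hc he hba ha hb
    have hhalf := half_exp_le a b hba
    have hA : Real.exp (a / 2) ≤ Real.exp 1 * c := by
      calc Real.exp (a / 2) ≤ Real.exp (1 + Real.log c) :=
            Real.exp_le_exp.mpr (by linarith)
        _ = Real.exp 1 * c := by rw [Real.exp_add, Real.exp_log hc]
    have hB : Real.exp (b / 2) ≤ Real.exp 1 * e := by
      calc Real.exp (b / 2) ≤ Real.exp (1 + Real.log e) :=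
            Real.exp_le_exp.mpr (by linarith)
        _ = Real.exp 1 * e := by rw [Real.exp_add, Real.exp_log he]
    have hsum : Real.exp ((a + (a - b) / (Real.exp (a - b) - 1)) / 2)
        ≤ Real.exp (1 + Real.log (c + e)) := by
      rw [Real.exp_add, Real.exp_log (by linarith)]
      calc Real.exp ((a + (a - b) / (Real.exp (a - b) - 1)) / 2)
          ≤ Real.exp (a / 2) + Real.exp (b / 2) := hhalf
        _ ≤ Real.exp 1 * c + Real.exp 1 * e := add_le_add hA hB
        _ = Real.exp 1 * (c + e) := by ring
    have := Real.exp_le_exp.mp hsum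
    linarith
  rcases lt_or_gt_of_ne hne with hlt | hgt
  · rw [ratio_symm r1 r2 hne]
    have := key r2 r1 y2 y1 hy2 hy1 hlt h2 h1
    rwa [add_comm y2 y1] at this
  · exact key r1 r2 y1 y2 hy1 hy2 hgt h1 h2
end

section
/- Let C : X → ℝ_+ be a cost function on a finite set X, let T := max_{x∈X} C(x), and define c(t)(x) := 1{C(x) ≥ t} for t ∈ [0, T]. Then for any piecewise-continuous path ρ : [0, T] → X (with finitely many jumps), ∫_0^T c(t)(ρ(t)) dt ≥ min_{t ∈ [0,T]} C(ρ(t)). -/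
open MeasureTheory Set

/-- The waterfilling inequality: the integrated continuous service cost dominates
the smallest discrete cost encountered along a piecewise-constant path. -/
theorem waterfilling {X : Type*} [Fintype X] [Nonempty X] (C : X → ℝ)
    (hC : ∀ x, 0 ≤ C x)
    (T : ℝ) (hT : T = Finset.univ.sup' Finset.univ_nonempty C)
    (ρ : ℝ → X) (k : ℕ) (s : Fin (k+1) → ℝ) (hmono : Monotone s)
    (hs0 : s 0 = 0) (hsT : s (Fin.last k) = T)
    (hconst : ∀ j : Fin k, ∀ t₁ ∈ Set.Ioo (s j.castSucc) (s j.succ),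
        ∀ t₂ ∈ Set.Ioo (s j.castSucc) (s j.succ), ρ t₁ = ρ t₂) :
    sInf ((fun t => C (ρ t)) '' Set.Icc 0 T) ≤
      ∫ t in (0:ℝ)..T, if t ≤ C (ρ t) then (1:ℝ) else 0 := by
  classical
  set f : ℝ → ℝ := fun t => if t ≤ C (ρ t) then (1:ℝ) else 0 with hf
  have hT0 : 0 ≤ T := by
    rw [hT]
    exact le_trans (hC (Classical.arbitrary X)) (Finset.le_sup' C (Finset.mem_univ _))
  have hfin : ((fun t => C (ρ t)) '' Set.Icc 0 T).Finite :=
    (Set.finite_range C).subset (by rintro _ ⟨t, _, rfl⟩; exact ⟨ρ t, rfl⟩)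
  have hne : ((fun t => C (ρ t)) '' Set.Icc 0 T).Nonempty :=
    ⟨_, ⟨0, Set.left_mem_Icc.2 hT0, rfl⟩⟩
  set m := sInf ((fun t => C (ρ t)) '' Set.Icc 0 T) with hm
  obtain ⟨t₀, ht₀, hmt₀⟩ := hne.csInf_mem hfin
  have hm0 : 0 ≤ m := by rw [hm, ← hmt₀]; exact hC _
  have hmle : ∀ t ∈ Set.Icc (0:ℝ) T, m ≤ C (ρ t) := fun t ht =>
    csInf_le hfin.bddBelow ⟨t, ht, rfl⟩
  have hmT : m ≤ T := by
    calc m ≤ C (ρ 0) := hmle 0 (Set.left_mem_Icc.2 hT0)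
    _ ≤ T := hT ▸ Finset.le_sup' C (Finset.mem_univ _)
  -- integrability of f on [0, T]
  have hint : IntervalIntegrable f volume 0 T := by
    rw [intervalIntegrable_iff_integrableOn_Ioc_of_le hT0]
    have hsub : Set.Ioc (0:ℝ) T ⊆
        (Set.range s) ∪ ⋃ j : Fin k, Set.Ioo (s j.castSucc) (s j.succ) := by
      intro t ht
      by_cases hr : t ∈ Set.range s
      · exact Or.inl hr
      · right
        have hF : (Finset.filter (fun i : Fin (k+1) => s i < t) Finset.univ).Nonempty :=
          ⟨0, by simp [hs0, ht.1]⟩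
        set F := Finset.filter (fun i : Fin (k+1) => s i < t) Finset.univ with hFdef
        set j := F.max' hF with hj
        have hjF : j ∈ F := F.max'_mem hF
        have hjlt : s j < t := by
          have := Finset.mem_filter.1 hjF
          exact this.2
        have hjk : (j : ℕ) < k := by
          by_contra h
          have hjval : (j : ℕ) = k := le_antisymm (Nat.lt_succ_iff.1 j.isLt) (not_lt.1 h)
          have : j = Fin.last k := Fin.ext hjval
          rw [this, hsT] at hjlt
          exact absurd ht.2 (not_le.2 hjlt)
        set j' : Fin k := ⟨(j : ℕ), hjk⟩ with hj'
        have hcast : j'.castSucc = j := Fin.ext rfl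
        have hsuccnot : ¬ s j'.succ < t := by
          intro h
          have hmem : (j'.succ : Fin (k+1)) ∈ F := Finset.mem_filter.2 ⟨Finset.mem_univ _, h⟩
          have := F.le_max' _ hmem
          rw [← hj] at this
          have hlt : j < j'.succ := by
            have : (j : ℕ) < (j'.succ : ℕ) := by simp [hj', Fin.val_succ]
            exact this
          exact absurd this (not_le.2 hlt)
        have htlt : t < s j'.succ := by
          rcases lt_or_eq_of_le (not_lt.1 hsuccnot) with h | h
          · exact h
          · exact absurd ⟨j'.succ, h.symm⟩ hr
        refine Set.mem_iUnion.2 ⟨j', ?_⟩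
        rw [hcast]
        exact ⟨hjlt, htlt⟩
    refine MeasureTheory.IntegrableOn.mono_set ?_ hsub
    apply MeasureTheory.IntegrableOn.union
    · have hz : volume.restrict (Set.range s) = 0 :=
        Measure.restrict_eq_zero.2 ((Set.finite_range s).measure_zero _)
      rw [IntegrableOn, hz]
      exact integrable_zero_measure
    · rw [integrableOn_finite_iUnion]
      intro j
      by_cases hab : s j.castSucc < s j.succ
      · set a := s j.castSucc
        set b := s j.succ
        have htmid : (a + b) / 2 ∈ Set.Ioo a b := ⟨by linarith, by linarith⟩
        set c := C (ρ ((a + b) / 2)) with hc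
        have heq : Set.EqOn (fun t => if t ≤ c then (1:ℝ) else 0) f (Set.Ioo a b) := by
          intro t htt
          have : ρ t = ρ ((a + b) / 2) := hconst j t htt _ htmid
          simp only [f, hc, this]
        have hmeas : Measurable (fun t : ℝ => if t ≤ c then (1:ℝ) else 0) :=
          Measurable.ite measurableSet_Iic measurable_const measurable_const
        have hgint : IntegrableOn (fun t : ℝ => if t ≤ c then (1:ℝ) else 0)
            (Set.Ioo a b) volume := by
          refine MeasureTheory.Integrable.mono' (integrable_const 1)
            hmeas.aestronglyMeasurable ?_
          filter_upwards with t
          by_cases h : t ≤ c <;> simp [h]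
        exact hgint.congr_fun heq measurableSet_Ioo
      · rw [Set.Ioo_eq_empty hab]
        exact integrableOn_empty
  have hi1 : IntervalIntegrable f volume 0 m := hint.mono_set (by
    rw [Set.uIcc_of_le hm0, Set.uIcc_of_le hT0]
    exact Set.Icc_subset_Icc le_rfl hmT)
  have hi2 : IntervalIntegrable f volume m T := hint.mono_set (by
    rw [Set.uIcc_of_le hmT, Set.uIcc_of_le hT0]
    exact Set.Icc_subset_Icc hm0 le_rfl)
  have hsplit : (∫ t in (0:ℝ)..m, f t) + ∫ t in m..T, f t = ∫ t in (0:ℝ)..T, f t :=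
    intervalIntegral.integral_add_adjacent_intervals hi1 hi2
  have h1 : ∫ t in (0:ℝ)..m, f t = m := by
    rw [intervalIntegral.integral_congr (g := fun _ => (1:ℝ)) ?_]
    · simp
    · intro t ht
      rw [Set.uIcc_of_le hm0] at ht
      have htC : t ≤ C (ρ t) := le_trans ht.2 (hmle t ⟨ht.1, le_trans ht.2 hmT⟩)
      simp [f, htC]
  have h2 : 0 ≤ ∫ t in m..T, f t := by
    apply intervalIntegral.integral_nonneg hmT
    intro u _
    by_cases h : u ≤ C (ρ u) <;> simp [f, h]
  calc m = ∫ t in (0:ℝ)..m, f t := h1.symm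
  _ ≤ (∫ t in (0:ℝ)..m, f t) + ∫ t in m..T, f t := by linarith
  _ = ∫ t in (0:ℝ)..T, f t := hsplit
end

section
/- Let η_1, ..., η_n > 0, δ_1, ..., δ_n ∈ (0, 1/2], and c, ξ, x ∈ ℝ_+^n with ξ_i > 0 ⟹ x_i = 0, and μ ≥ 0. Suppose x'_i = (η_i / w_i)(x_i + δ_i)(μ − c_i + ξ_i) for weights w_i > 0 and that c_i ≥ ξ_i for all i. Then Σ_{i : x'_i ≤ 0} w_i |x'_i| ≤ ⟨η ⊙ x, c⟩ + ⟨η ⊙ δ, c − ξ⟩, where ⊙ denotes entrywise product. -/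
/-- Instantaneous negative-movement bound for the multi-learning-rate mirror
descent dynamics on the simplex. -/
theorem neg_movement_bound_multi (n : ℕ) (η δ w c ξ x x' : Fin n → ℝ)
    (hη : ∀ i, 0 < η i) (hδ : ∀ i, δ i ∈ Set.Ioc (0:ℝ) (1/2))
    (hw : ∀ i, 0 < w i) (hc : ∀ i, 0 ≤ c i) (hξ : ∀ i, 0 ≤ ξ i)
    (hx : ∀ i, 0 ≤ x i)
    (hcs : ∀ i, 0 < ξ i → x i = 0) (μ : ℝ) (hμ : 0 ≤ μ)
    (hdyn : ∀ i, x' i = (η i / w i) * (x i + δ i) * (μ - c i + ξ i))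
    (hcξ : ∀ i, ξ i ≤ c i) :
    (∑ i, if x' i ≤ 0 then w i * |x' i| else 0) ≤
      (∑ i, η i * x i * c i) + ∑ i, η i * δ i * (c i - ξ i) := by
  rw [← Finset.sum_add_distrib]
  apply Finset.sum_le_sum
  intro i _
  have hηi := hη i
  have hwi := hw i
  have hδi := (hδ i).1
  have hci := hc i
  have hξi := hξ i
  have hxi := hx i
  have hcξi := hcξ i
  by_cases h : x' i ≤ 0
  · simp only [if_pos h]
    have hx'eq : x' i = (η i / w i) * (x i + δ i) * (μ - c i + ξ i) := hdyn i
    have habs : |x' i| = -(x' i) := abs_of_nonpos h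
    rw [habs, hx'eq]
    have hdiv : w i * -((η i / w i) * (x i + δ i) * (μ - c i + ξ i)) =
        η i * (x i + δ i) * (c i - ξ i - μ) := by
      field_simp; ring
    rw [hdiv]
    have hμle : c i - ξ i - μ ≤ c i - ξ i := by linarith
    have hsum : 0 ≤ x i + δ i := by linarith
    have h1 : η i * (x i + δ i) * (c i - ξ i - μ) ≤ η i * (x i + δ i) * (c i - ξ i) := by
      apply mul_le_mul_of_nonneg_left hμle
      positivity
    have h2 : η i * (x i + δ i) * (c i - ξ i) ≤ η i * x i * c i + η i * δ i * (c i - ξ i) := by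
      nlinarith [mul_nonneg hxi hξi]
    linarith
  · simp only [if_neg h]
    have : 0 ≤ x i * ξ i := mul_nonneg hxi hξi
    nlinarith [mul_nonneg hxi hci, mul_nonneg hδi.le (sub_nonneg.mpr hcξi)]
end

section
/- Let w_i > 0, η > 0, δ ∈ (0,1/2], and suppose x ∈ ℝ_+^n with Σ_i x_i = 1, c ∈ ℝ_+^n, μ ≥ 0, ξ ∈ ℝ_+^n with c_i ≥ ξ_i, and x'_i = (η/w_i)(x_i + δ)(μ − c_i + ξ_i) with Σ_{i : x_i ≠ 0} x'_i = 0 and ξ_i > 0 ⟹ x_i = 0. Then Σ_{i : x'_i ≤ 0} w_i |x'_i| ≤ η ⟨x + δ·1, c − ξ⟩. -/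
/-- Instantaneous movement bound for entropic mirror descent on a weighted star. -/
theorem neg_movement_bound_star (n : ℕ) (w c ξ x x' : Fin n → ℝ) (η δ μ : ℝ)
    (hw : ∀ i, 0 < w i) (hη : 0 < η) (hδ0 : 0 < δ) (hδ : δ ≤ 1/2)
    (hx : ∀ i, 0 ≤ x i) (hsum : ∑ i, x i = 1) (hc : ∀ i, 0 ≤ c i)
    (hμ : 0 ≤ μ) (hξ : ∀ i, 0 ≤ ξ i) (hcξ : ∀ i, ξ i ≤ c i)
    (hdyn : ∀ i, x' i = (η / w i) * (x i + δ) * (μ - c i + ξ i))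
    (hstat : ∑ i ∈ Finset.univ.filter (fun i => x i ≠ 0), x' i = 0)
    (hcs : ∀ i, 0 < ξ i → x i = 0) :
    (∑ i, if x' i ≤ 0 then w i * |x' i| else 0) ≤
      η * ∑ i, (x i + δ) * (c i - ξ i) := by
  rw [Finset.mul_sum]
  apply Finset.sum_le_sum
  intro i _
  have hwi := hw i
  have hkey : w i * x' i = η * (x i + δ) * (μ - c i + ξ i) := by
    rw [hdyn i]; field_simp
  have hxd : 0 < x i + δ := by linarith [hx i]
  have hcx : 0 ≤ c i - ξ i := by linarith [hcξ i]
  split_ifs with h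
  · rw [abs_of_nonpos h]
    nlinarith [mul_pos hη hxd]
  · positivity
end
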